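/- Let X be a countable collection of languages and K ∈ X. Suppose that for every ε > 0 there exists an infinite perfect tower of languages from X with terminal language K in which every language has upper density at most ε in K. Then for every index-based generation algorithm f that guarantees validity for X and every ε > 0, there exists an enumeration E of K such that μ_up(L_{i_t}, K) ≤ ε for infinitely many steps t, where i_t = f(w_1, …, w_t). -/

import Mathlib

/-- The finite prefix `[E 0, …, E t]` of the adversary's enumeration. -/
def epref (E : ℕ → ℕ) (t : ℕ) : List ℕ := (List.range (t + 1)).map E

/-- `E` is an enumeration of the language `K`. -/
def IsEnum (E : ℕ → ℕ) (K : Set ℕ) : Prop := Function.Injective E ∧ Set.range E = K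

/-- The upper density of `L` in the infinite set `K`:
`limsup_{N→∞} |L ∩ {k_1,…,k_N}| / N`, where `k_1 < k_2 < ⋯` lists `K` in
increasing order (`Nat.nth (· ∈ K)` gives this listing, 0-indexed). -/
noncomputable def upperDensity (L K : Set ℕ) : ℝ :=
  Filter.limsup
    (fun N : ℕ => ((Set.ncard {n : ℕ | n < N ∧ Nat.nth (· ∈ K) n ∈ L}) : ℝ) / N)
    Filter.atTop

/-- The sets `B_k` associated with a sequence of languages:
`B_0 = ⋂_i Λ i` and `B_k = (⋂_{i ≥ k} Λ i) \ (B_0 ∪ ⋯ ∪ B_{k-1})`. -/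
def towerB (Λ : ℕ → Set ℕ) : ℕ → Set ℕ
  | k => {w | ∀ i, k ≤ i → w ∈ Λ i} \ {w | ∃ m, ∃ _ : m < k, w ∈ towerB Λ m}

/-- `(Λ 0, Λ 1, …)` is an infinite perfect tower of (pairwise distinct, infinite)
languages with terminal language `K`. -/
structure IsPerfectTower (Λ : ℕ → Set ℕ) (K : Set ℕ) : Prop where
  injective : Function.Injective Λ
  infinite : ∀ j, (Λ j).Infinite
  proper : ∀ j, Λ j ⊂ K
  nonempty : ∀ j, (towerB Λ j).Nonempty
  complete : (⋃ j, towerB Λ j) = K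

/-- The index-based generation algorithm `f` guarantees validity for the collection
`L`: on any enumeration of any member of the collection, its guesses are eventually
always subsets of the enumerated language. -/
def GuaranteesValidity (L : ℕ → Set ℕ) (f : List ℕ → ℕ) : Prop :=
  ∀ (i : ℕ) (E : ℕ → ℕ), IsEnum E (L i) →
    ∃ t0 : ℕ, ∀ t ≥ t0, L (f (epref E t)) ⊆ L i

/- ---------- auxiliary lemmas ---------- -/

lemma ncard_bound (L K : Set ℕ) (N : ℕ) :
    Set.ncard {n : ℕ | n < N ∧ Nat.nth (· ∈ K) n ∈ L} ≤ N := by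
  have hsub : {n : ℕ | n < N ∧ Nat.nth (· ∈ K) n ∈ L} ⊆ Set.Iio N := fun n hn => hn.1
  have hc := Set.ncard_le_ncard hsub (Set.finite_Iio N)
  rwa [← Finset.coe_Iio, Set.ncard_coe_finset, Nat.card_Iio] at hc

lemma dens_fun_nonneg (L K : Set ℕ) (N : ℕ) :
    0 ≤ ((Set.ncard {n : ℕ | n < N ∧ Nat.nth (· ∈ K) n ∈ L}) : ℝ) / N := by
  positivity

lemma dens_fun_le_one (L K : Set ℕ) (N : ℕ) :
    ((Set.ncard {n : ℕ | n < N ∧ Nat.nth (· ∈ K) n ∈ L}) : ℝ) / N ≤ 1 := by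
  rcases Nat.eq_zero_or_pos N with h | h
  · simp [h]
  · rw [div_le_one (by positivity)]
    exact_mod_cast Nat.cast_le.mpr (ncard_bound L K N)

lemma upperDensity_mono {A B : Set ℕ} (K : Set ℕ) (h : A ⊆ B) :
    upperDensity A K ≤ upperDensity B K := by
  apply Filter.limsup_le_limsup
  · filter_upwards with N
    rcases Nat.eq_zero_or_pos N with h0 | h0
    · simp [h0]
    · have hN : (0:ℝ) < N := by exact_mod_cast h0
      rw [div_le_div_iff_of_pos_right hN]
      have hsub : {n : ℕ | n < N ∧ Nat.nth (· ∈ K) n ∈ A}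
          ⊆ {n : ℕ | n < N ∧ Nat.nth (· ∈ K) n ∈ B} := fun n hn => ⟨hn.1, h hn.2⟩
      have hfin : {n : ℕ | n < N ∧ Nat.nth (· ∈ K) n ∈ B}.Finite :=
        (Set.finite_Iio N).subset (fun n hn => hn.1)
      exact Nat.cast_le.mpr (Set.ncard_le_ncard hsub hfin)
  · exact Filter.isCoboundedUnder_le_of_le Filter.atTop (fun N => dens_fun_nonneg A K N)
  · exact ⟨1, Filter.eventually_atTop.mpr ⟨0, fun N _ => dens_fun_le_one B K N⟩⟩

lemma ext_enum (S : Set ℕ) (hS : S.Infinite) (p : List ℕ) (hp : p.Nodup)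
    (hmem : ∀ x ∈ p, x ∈ S) :
    ∃ E : ℕ → ℕ, IsEnum E S ∧ ∀ n, n < p.length → E n = p.getD n 0 := by
  set q : ℕ → Prop := fun x => x ∈ S ∧ x ∉ p with hq
  have hqinf : (setOf q).Infinite := by
    have : setOf q = S \ {x | x ∈ p} := by ext x; simp [hq]; exact Iff.rfl
    rw [this]
    exact hS.diff (p.finite_toSet)
  set E : ℕ → ℕ := fun n => if h : n < p.length then p[n] else Nat.nth q (n - p.length)
    with hE
  have hgetD : ∀ n, n < p.length → E n = p.getD n 0 := by
    intro n h
    simp only [hE, dif_pos h]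
    exact (List.getD_eq_getElem p 0 h).symm
  have hlow : ∀ n (h : n < p.length), E n = p[n] := fun n h => by simp [hE, dif_pos h]
  have hhigh : ∀ n, p.length ≤ n → E n = Nat.nth q (n - p.length) := fun n h => by
    simp [hE, Nat.not_lt.mpr h]
  refine ⟨E, ⟨?_, ?_⟩, hgetD⟩
  · intro a b hab
    rcases lt_or_ge a p.length with ha | ha <;> rcases lt_or_ge b p.length with hb | hb
    · rw [hlow a ha, hlow b hb] at hab
      exact (List.Nodup.getElem_inj_iff hp).mp hab
    · rw [hlow a ha, hhigh b hb] at hab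
      have h1 : p[a] ∈ p := List.getElem_mem ha
      have h2 : q (Nat.nth q (b - p.length)) := Nat.nth_mem_of_infinite hqinf _
      rw [← hab] at h2
      exact absurd (h2.2 h1) (by simp)
    · rw [hhigh a ha, hlow b hb] at hab
      have h2 : q (Nat.nth q (a - p.length)) := Nat.nth_mem_of_infinite hqinf _
      rw [hab] at h2
      exact absurd (h2.2 (List.getElem_mem hb)) (by simp)
    · rw [hhigh a ha, hhigh b hb] at hab
      have := Nat.nth_injective hqinf hab
      omega
  · ext x
    constructor
    · rintro ⟨n, rfl⟩
      rcases lt_or_ge n p.length with h | h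
      · rw [hlow n h]; exact hmem _ (List.getElem_mem h)
      · rw [hhigh n h]; exact (Nat.nth_mem_of_infinite hqinf _).1
    · intro hx
      by_cases hxp : x ∈ p
      · obtain ⟨n, h, rfl⟩ := List.mem_iff_getElem.mp hxp
        exact ⟨n, hlow n h⟩
      · have : x ∈ Set.range (Nat.nth q) := by
          rw [Nat.range_nth_of_infinite hqinf]; exact ⟨hx, hxp⟩
        obtain ⟨m, hm⟩ := this
        refine ⟨m + p.length, ?_⟩
        rw [hhigh _ (Nat.le_add_left _ _), Nat.add_sub_cancel, hm]

lemma towerB_subset (Λ : ℕ → Set ℕ) (k : ℕ) :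
    towerB Λ k ⊆ {w | ∀ i, k ≤ i → w ∈ Λ i} := by
  rw [towerB]
  exact Set.diff_subset

/-- If for every `ε > 0` there is an infinite perfect tower of languages from the
collection with terminal language `K = L z`, all of whose languages have upper
density at most `ε` in `K`, then every valid index-based algorithm has, for every
`ε > 0`, an enumeration of `K` on which it guesses languages of upper density at
most `ε` in `K` at infinitely many steps. -/
theorem stmt5 (L : ℕ → Set ℕ) (hinf : ∀ i, (L i).Infinite) (z : ℕ)
    (htower : ∀ ε : ℝ, 0 < ε →
      ∃ Λ : ℕ → Set ℕ, (∀ j, ∃ i, Λ j = L i) ∧ IsPerfectTower Λ (L z) ∧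
        ∀ j, upperDensity (Λ j) (L z) ≤ ε) :
    ∀ f : List ℕ → ℕ, GuaranteesValidity L f →
      ∀ ε : ℝ, 0 < ε →
        ∃ E : ℕ → ℕ, IsEnum E (L z) ∧
          {t : ℕ | upperDensity (L (f (epref E t))) (L z) ≤ ε}.Infinite := by
  intro f hf ε hε
  obtain ⟨Λ, hΛL, tower, hdens⟩ := htower ε hε
  -- every element of K lies in all sufficiently high tower languages
  have hlev : ∀ x ∈ L z, ∃ k, ∀ i, k ≤ i → x ∈ Λ i := by
    intro x hx
    rw [← tower.complete] at hx
    obtain ⟨_, ⟨k, rfl⟩, hxk⟩ := hx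
    exact ⟨k, fun i hi => towerB_subset Λ k hxk i hi⟩
  -- a finite list of elements of K lies in some single tower language
  have hlist : ∀ p : List ℕ, (∀ x ∈ p, x ∈ L z) → ∃ j, ∀ x ∈ p, ∀ i, j ≤ i → x ∈ Λ i := by
    intro p
    induction p with
    | nil => exact fun _ => ⟨0, by simp⟩
    | cons a p ih =>
      intro hmem
      obtain ⟨j, hj⟩ := ih (fun x hx => hmem x (List.mem_cons_of_mem _ hx))
      obtain ⟨k, hk⟩ := hlev a (hmem a List.mem_cons_self)
      refine ⟨max j k, fun x hx i hi => ?_⟩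
      rcases List.mem_cons.mp hx with rfl | hx
      · exact hk i (le_trans (le_max_right _ _) hi)
      · exact hj x hx i (le_trans (le_max_left _ _) hi)
  -- the one-round extension step
  have hstep : ∀ p : List ℕ, ∃ q : List ℕ, p.Nodup → (∀ x ∈ p, x ∈ L z) →
      (p <+: q ∧ q.Nodup ∧ (∀ x ∈ q, x ∈ L z) ∧ sInf {x | x ∈ L z ∧ x ∉ p} ∈ q ∧
        ∃ t, p.length ≤ t ∧ t + 1 ≤ q.length ∧
          upperDensity (L (f (q.take (t+1)))) (L z) ≤ ε) := by
    intro p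
    by_cases hok : p.Nodup ∧ ∀ x ∈ p, x ∈ L z
    swap
    · exact ⟨[], fun h1 h2 => absurd ⟨h1, h2⟩ hok⟩
    obtain ⟨hnd, hmem⟩ := hok
    obtain ⟨j, hj⟩ := hlist p hmem
    obtain ⟨i, hΛi⟩ := hΛL j
    obtain ⟨E, hEnum, hEp⟩ := ext_enum (Λ j) (tower.infinite j) p hnd
      (fun x hx => hj x hx j le_rfl)
    obtain ⟨t0, ht0⟩ := hf i E (hΛi ▸ hEnum)
    set t := max t0 p.length with ht
    have hsub : L (f (epref E t)) ⊆ Λ j := hΛi ▸ ht0 t (le_max_left _ _)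
    have hgd : upperDensity (L (f (epref E t))) (L z) ≤ ε :=
      le_trans (upperDensity_mono (L z) hsub) (hdens j)
    -- the least element of K missing from p
    have hne : {x | x ∈ L z ∧ x ∉ p}.Nonempty := by
      obtain ⟨x, hx⟩ := ((hinf z).diff p.finite_toSet).nonempty
      exact ⟨x, hx.1, hx.2⟩
    set a := sInf {x | x ∈ L z ∧ x ∉ p} with ha
    have haK : a ∈ L z ∧ a ∉ p := Nat.sInf_mem hne
    -- basic facts about the prefix epref E t
    have hlenE : (epref E t).length = t + 1 := by simp [epref]
    have hgetE : ∀ n (h : n < t + 1), (epref E t)[n]'(by rw [hlenE]; exact h) = E n := by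
      intro n h; simp [epref]
    have hndE : (epref E t).Nodup := by
      exact List.Nodup.map hEnum.1 List.nodup_range
    have hmemE : ∀ x ∈ epref E t, x ∈ Λ j := by
      intro x hx
      simp only [epref, List.mem_map] at hx
      obtain ⟨n, _, rfl⟩ := hx
      have : E n ∈ Set.range E := ⟨n, rfl⟩
      rwa [hEnum.2] at this
    have hprefp : p <+: epref E t := by
      rw [List.prefix_iff_eq_take]
      apply List.ext_getElem
      · rw [List.length_take, hlenE]
        omega
      · intro n h1 h2
        have hn : n < p.length := h1
        have hn2 : n < t + 1 := by omega
        rw [List.getElem_take]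
        rw [hgetE n hn2, hEp n hn, List.getD_eq_getElem p 0 hn]
    -- build q
    by_cases hain : a ∈ epref E t
    · refine ⟨epref E t, fun _ _ => ⟨hprefp, hndE,
        fun x hx => (tower.proper j).subset (hmemE x hx), hain, t, le_max_right _ _,
        by rw [hlenE], ?_⟩⟩
      have : (epref E t).take (t+1) = epref E t := by
        apply List.take_of_length_le; rw [hlenE]
      rwa [this]
    · refine ⟨epref E t ++ [a], fun _ _ => ⟨hprefp.trans (List.prefix_append _ _), ?_,
        ?_, by simp, t, le_max_right _ _, by simp [hlenE], ?_⟩⟩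
      · rw [List.nodup_append]
        exact ⟨hndE, List.nodup_singleton a, fun y hy b hb h => hain (by rw [List.mem_singleton.mp hb] at h; rw [← h]; exact hy)⟩
      · intro x hx
        rcases List.mem_append.mp hx with hx | hx
        · exact (tower.proper j).subset (hmemE x hx)
        · rw [List.mem_singleton.mp hx]; exact haK.1
      · have : (epref E t ++ [a]).take (t+1) = epref E t := by
          rw [← hlenE, List.take_left]
        rwa [this]
  -- iterate the step
  choose g hg using hstep
  set P : ℕ → List ℕ := fun s => Nat.rec ([] : List ℕ) (fun _ ih => g ih) s with hP
  have hP0 : P 0 = [] := rfl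
  have hPS : ∀ s, P (s + 1) = g (P s) := fun s => rfl
  have hinv : ∀ s, (P s).Nodup ∧ (∀ x ∈ P s, x ∈ L z) := by
    intro s
    induction s with
    | zero => simp [hP0]
    | succ s ih =>
      obtain ⟨_, hnd, hmem, _, _⟩ := hg (P s) ih.1 ih.2
      exact ⟨by rwa [hPS], by rwa [hPS]⟩
  have hprop : ∀ s, P s <+: P (s+1) ∧ sInf {x | x ∈ L z ∧ x ∉ P s} ∈ P (s+1) ∧
      ∃ t, (P s).length ≤ t ∧ t + 1 ≤ (P (s+1)).length ∧
        upperDensity (L (f ((P (s+1)).take (t+1)))) (L z) ≤ ε := by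
    intro s
    obtain ⟨h1, _, _, h4, h5⟩ := hg (P s) (hinv s).1 (hinv s).2
    exact ⟨by rwa [hPS], by rwa [hPS], by rwa [hPS]⟩
  have hlen : ∀ s, (P s).length < (P (s+1)).length := by
    intro s
    obtain ⟨_, _, t, h1, h2, _⟩ := hprop s
    omega
  have hlen' : ∀ s, s ≤ (P s).length := by
    intro s
    induction s with
    | zero => simp
    | succ s ih => have := hlen s; omega
  have hchain : ∀ s s', s ≤ s' → P s <+: P s' := by
    intro s s' h
    induction s' with
    | zero => rw [Nat.le_zero.mp h]
    | succ s' ih =>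
      rcases Nat.lt_or_ge s (s'+1) with h' | h'
      · exact (ih (by omega)).trans (hprop s').1
      · rw [Nat.le_antisymm h h']
  -- the limit enumeration
  set E : ℕ → ℕ := fun n => (P (n+1)).getD n 0 with hE
  have hEP : ∀ s n, n < (P s).length → (P s).getD n 0 = E n := by
    intro s n hn
    have hn1 : n < (P (n+1)).length := lt_of_lt_of_le (Nat.lt_succ_self n) (hlen' (n+1))
    show (P s).getD n 0 = (P (n+1)).getD n 0
    rcases Nat.le_total s (n+1) with h | h
    · have hpre := hchain s (n+1) h
      rw [List.getD_eq_getElem _ 0 hn, List.getD_eq_getElem _ 0 hn1]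
      exact (hpre.getElem hn)
    · have hpre := hchain (n+1) s h
      rw [List.getD_eq_getElem _ 0 hn, List.getD_eq_getElem _ 0 hn1]
      exact (hpre.getElem hn1).symm
  have hEget : ∀ s n (hn : n < (P s).length), (P s)[n] = E n := by
    intro s n hn
    rw [← List.getD_eq_getElem _ 0 hn]
    exact hEP s n hn
  have hEmem : ∀ n, E n ∈ P (n+1) := by
    intro n
    have hn1 : n < (P (n+1)).length := lt_of_lt_of_le (Nat.lt_succ_self n) (hlen' (n+1))
    rw [← hEget (n+1) n hn1]
    exact List.getElem_mem hn1
  refine ⟨E, ⟨?_, ?_⟩, ?_⟩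
  · -- injective
    intro a b hab
    set s := max a b + 1 with hs
    have hsa : a < (P s).length := lt_of_lt_of_le (by omega) (hlen' s)
    have hsb : b < (P s).length := lt_of_lt_of_le (by omega) (hlen' s)
    have : (P s)[a] = (P s)[b] := by rw [hEget s a hsa, hEget s b hsb]; exact hab
    exact (List.Nodup.getElem_inj_iff (hinv s).1).mp this
  · -- range = L z
    ext x
    constructor
    · rintro ⟨n, rfl⟩
      exact (hinv (n+1)).2 _ (hEmem n)
    · intro hx
      by_contra hnr
      -- x is never enumerated, hence never in any P s
      have hnot : ∀ s, x ∉ P s := by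
        intro s hxs
        obtain ⟨n, hn, rfl⟩ := List.mem_iff_getElem.mp hxs
        exact hnr ⟨n, (hEget s n hn).symm⟩
      -- each step adds a new element ≤ x
      set F : ℕ → Finset ℕ := fun s => (Finset.range (x+1)).filter (fun y => y ∈ P s)
        with hF
      have hFcard : ∀ s, s ≤ (F s).card := by
        intro s
        induction s with
        | zero => simp
        | succ s ih =>
          have hne : {y | y ∈ L z ∧ y ∉ P s}.Nonempty := ⟨x, hx, hnot s⟩
          set a := sInf {y | y ∈ L z ∧ y ∉ P s} with ha
          have haP : a ∈ L z ∧ a ∉ P s := Nat.sInf_mem hne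
          have hax : a ≤ x := Nat.sInf_le ⟨hx, hnot s⟩
          have haS : a ∈ P (s+1) := (hprop s).2.1
          have hsub : F s ⊆ F (s+1) := by
            intro y hy
            simp only [hF, Finset.mem_filter, Finset.mem_range] at hy ⊢
            exact ⟨hy.1, (hprop s).1.subset hy.2⟩
          have hss : F s ⊂ F (s+1) := by
            refine ⟨hsub, fun hc => ?_⟩
            have : a ∈ F s := hc (by
              simp only [hF, Finset.mem_filter, Finset.mem_range]
              exact ⟨by omega, haS⟩)
            simp only [hF, Finset.mem_filter] at this
            exact haP.2 this.2
          have := Finset.card_lt_card hss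
          omega
      have hbound : (F (x+2)).card ≤ x + 1 := by
        have : F (x+2) ⊆ Finset.range (x+1) := Finset.filter_subset _ _
        calc (F (x+2)).card ≤ (Finset.range (x+1)).card := Finset.card_le_card this
          _ = x + 1 := Finset.card_range _
      have := hFcard (x+2)
      omega
  · -- infinitely many good steps
    apply Set.infinite_of_not_bddAbove
    rintro ⟨b, hb⟩
    obtain ⟨hpre, hsinf, t, ht1, ht2, ht3⟩ := hprop (b+1)
    -- epref E t = (P (b+1+1)).take (t+1)
    have hmatch : epref E t = (P (b+1+1)).take (t+1) := by
      apply List.ext_getElem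
      · simp [epref, List.length_take]
        omega
      · intro n h1 h2
        have hn : n < t + 1 := by simpa [epref] using h1
        have hnP : n < (P (b+1+1)).length := by omega
        rw [List.getElem_take]
        simp only [epref, List.getElem_map, List.getElem_range]
        exact (hEget (b+1+1) n hnP).symm
    have hgood : t ∈ {t : ℕ | upperDensity (L (f (epref E t))) (L z) ≤ ε} := by
      rw [Set.mem_setOf_eq, hmatch]
      exact ht3
    have : t ≤ b := hb hgood
    have : b + 1 ≤ t := le_trans (hlen' (b+1)) ht1
    omega
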